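/- Let p ≥ 2 and c ≥ 1 + (2/p)^{1/(p-1)}. Then for all x ∈ ℝ^d with x₁ ≥ c, writing x = (x₁, x') ∈ ℝ × ℝ^{d-1}, one has |x|^p ≥ ((x₁ - 1)² + |x'|²)^{p/2} + 2. -/

import Mathlib

/-- Key Bernoulli-type step: for `0 < y ≤ x` and `1 ≤ q`,
`y^q + q * y^(q-1) * (x - y) ≤ x^q`. -/
lemma rpow_bernoulli_step {x y q : ℝ} (hy : 0 < y) (hxy : y ≤ x) (hq : 1 ≤ q) :
    y ^ q + q * y ^ (q - 1) * (x - y) ≤ x ^ q := by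
  have hx : 0 < x := lt_of_lt_of_le hy hxy
  have ht : (0:ℝ) ≤ (x - y) / y := div_nonneg (by linarith) hy.le
  have hb := one_add_mul_self_le_rpow_one_add (s := (x - y) / y) (by linarith) hq
  have hxx : 1 + (x - y) / y = x / y := by field_simp; ring
  rw [hxx] at hb
  have hdiv : (x / y) ^ q = x ^ q / y ^ q := Real.div_rpow hx.le hy.le q
  rw [hdiv] at hb
  have hyq : (0:ℝ) < y ^ q := Real.rpow_pos_of_pos hy q
  have hb' : (1 + q * ((x - y) / y)) * y ^ q ≤ x ^ q := by
    rw [← le_div_iff₀ hyq]; exact hb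
  have hsub : y ^ (q - 1) = y ^ q / y := by
    rw [Real.rpow_sub hy, Real.rpow_one]
  calc y ^ q + q * y ^ (q - 1) * (x - y)
      = (1 + q * ((x - y) / y)) * y ^ q := by
        rw [hsub]; field_simp
    _ ≤ x ^ q := hb'

/-- Case `p ≥ 2` of the cone-barrier lemma: for `c ≥ 1 + (2/p)^{1/(p-1)}`, the
half-space `{x₁ ≥ c}` is contained in `U = {x : |x|^p ≥ ((x₁-1)² + |x'|²)^{p/2} + 2}`. -/
theorem halfspace_in_barrier (d : ℕ) (p c : ℝ) (hp : 2 ≤ p)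
    (hc : 1 + (2 / p) ^ (1 / (p - 1)) ≤ c)
    (x₁ : ℝ) (x' : EuclideanSpace ℝ (Fin (d - 1))) (hx : c ≤ x₁) :
    ((x₁ - 1) ^ 2 + ‖x'‖ ^ 2) ^ (p / 2) + 2 ≤ (x₁ ^ 2 + ‖x'‖ ^ 2) ^ (p / 2) := by
  set s := ‖x'‖ ^ 2 with hs
  have hs0 : 0 ≤ s := sq_nonneg _
  have hp0 : (0:ℝ) < p := by linarith
  have hb2p : (0:ℝ) < (2 / p) ^ (1 / (p - 1)) :=
    Real.rpow_pos_of_pos (by positivity) _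
  have ha1 : (2 / p) ^ (1 / (p - 1)) ≤ x₁ - 1 := by linarith
  have ha1pos : 0 < x₁ - 1 := lt_of_lt_of_le hb2p ha1
  have hy0 : (0:ℝ) < (x₁ - 1) ^ 2 + s := by positivity
  have hxy : (x₁ - 1) ^ 2 + s ≤ x₁ ^ 2 + s := by nlinarith
  have hq1 : (1:ℝ) ≤ p / 2 := by linarith
  have key := rpow_bernoulli_step hy0 hxy hq1
  -- y^(q-1) ≥ (x₁-1)^(p-2)
  have h1 : (x₁ - 1) ^ (p - 2) ≤ ((x₁ - 1) ^ 2 + s) ^ (p / 2 - 1) := by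
    have h2 : ((x₁ - 1) ^ 2 : ℝ) ^ (p / 2 - 1) ≤ ((x₁ - 1) ^ 2 + s) ^ (p / 2 - 1) :=
      Real.rpow_le_rpow (by positivity) (by linarith) (by linarith)
    calc (x₁ - 1) ^ (p - 2)
        = ((x₁ - 1) ^ 2 : ℝ) ^ (p / 2 - 1) := by
          rw [← Real.rpow_natCast (x₁ - 1) 2, ← Real.rpow_mul ha1pos.le]
          congr 1; push_cast; ring
      _ ≤ _ := h2
  -- (x₁-1)^(p-1) ≥ 2/p
  have h3 : (2 / p : ℝ) ≤ (x₁ - 1) ^ (p - 1) := by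
    have := Real.rpow_le_rpow hb2p.le ha1 (by linarith : (0:ℝ) ≤ p - 1)
    rwa [← Real.rpow_mul (by positivity), one_div_mul_cancel (by linarith : p - 1 ≠ 0),
      Real.rpow_one] at this
  -- combine: p/2 * y^(q-1) * (x-y) ≥ 2
  have h4 : (x₁ - 1) ^ (p - 2) * (x₁ - 1) = (x₁ - 1) ^ (p - 1) := by
    rw [show p - 1 = p - 2 + 1 by ring, Real.rpow_add_one ha1pos.ne']
  have hx2 : (x₁ ^ 2 + s) - ((x₁ - 1) ^ 2 + s) = 2 * x₁ - 1 := by ring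
  have h5 : 2 ≤ p / 2 * ((x₁ - 1) ^ 2 + s) ^ (p / 2 - 1) * (x₁ ^ 2 + s - ((x₁ - 1) ^ 2 + s)) := by
    rw [hx2]
    have hpow0 : (0:ℝ) ≤ (x₁ - 1) ^ (p - 2) := Real.rpow_nonneg ha1pos.le _
    have step1 : p / 2 * (x₁ - 1) ^ (p - 2) * (2 * (x₁ - 1)) ≤
        p / 2 * ((x₁ - 1) ^ 2 + s) ^ (p / 2 - 1) * (2 * x₁ - 1) := by
      gcongr <;> first
        | exact h1
        | exact Real.rpow_nonneg ha1pos.le _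
        | positivity
        | linarith
    have step2 : (2:ℝ) ≤ p / 2 * (x₁ - 1) ^ (p - 2) * (2 * (x₁ - 1)) := by
      have : p / 2 * (x₁ - 1) ^ (p - 2) * (2 * (x₁ - 1)) = p * (x₁ - 1) ^ (p - 1) := by
        rw [← h4]; ring
      rw [this]
      have := mul_le_mul_of_nonneg_left h3 hp0.le
      rw [mul_div_cancel₀ 2 hp0.ne'] at this
      linarith
    linarith
  linarith [key]
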